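/- Over a field k of characteristic ≠ 2, a non-degenerate quadratic form that is stably hyperbolic (i.e., hyperbolic after adding ℍ(Q) for some finite-dimensional vector space Q) is hyperbolic. -/

import Mathlib

/-- The bilinear map `((x, f), (y, g)) ↦ f y` on `M × M^∨`. -/
noncomputable def evalBilin (k M : Type*) [Field k] [AddCommGroup M] [Module k M] :
    (M × Module.Dual k M) →ₗ[k] (M × Module.Dual k M) →ₗ[k] k :=
  LinearMap.mk₂ k (fun u v => u.2 v.1)
    (by intros; simp) (by intros; simp) (by intros; simp) (by intros; simp)

/-- The hyperbolic (evaluation) quadratic form `ev (x, f) = f x` on `M ⊕ M^∨`. -/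
noncomputable def evalForm (k M : Type*) [Field k] [AddCommGroup M] [Module k M] :
    QuadraticForm k (M × Module.Dual k M) :=
  LinearMap.BilinMap.toQuadraticMap (evalBilin k M)

/-- A quadratic form is hyperbolic if it is isometric to `ℍ(Q) = (Q ⊕ Q^∨, ev)` for
some finite-dimensional vector space `Q`. -/
def IsHyperbolic {k V : Type*} [Field k] [AddCommGroup V] [Module k V]
    (φ : QuadraticForm k V) : Prop :=
  ∃ m : ℕ, φ.Equivalent (evalForm k (Fin m → k))

open Module LinearMap

set_option linter.unusedSectionVars false
set_option maxHeartbeats 1000000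
set_option synthInstance.maxHeartbeats 400000

theorem evalForm_apply {k M : Type*} [Field k] [AddCommGroup M] [Module k M]
    (x : M × Module.Dual k M) : evalForm k M x = x.2 x.1 := rfl

theorem polar_evalForm {k M : Type*} [Field k] [AddCommGroup M] [Module k M]
    (x y : M × Module.Dual k M) :
    QuadraticMap.polar (evalForm k M) x y = x.2 y.1 + y.2 x.1 := by
  simp [QuadraticMap.polar, evalForm_apply]; ring

theorem evalForm_equivalent {k M N : Type*} [Field k] [AddCommGroup M] [Module k M]
    [AddCommGroup N] [Module k N] (e : M ≃ₗ[k] N) :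
    (evalForm k M).Equivalent (evalForm k N) :=
  ⟨{ e.prodCongr e.symm.dualMap with
     map_app' := fun x => by simp [evalForm_apply, LinearEquiv.prodCongr_apply] }⟩

set_option linter.unusedSectionVars false
section Core
variable {k V : Type*} [Field k] [AddCommGroup V] [Module k V] [FiniteDimensional k V]
  (φ : QuadraticForm k V)

theorem polarBilin_isRefl : (QuadraticMap.polarBilin φ).IsRefl := by
  intro x y h
  rwa [QuadraticMap.polarBilin_apply_apply, QuadraticMap.polar_comm,
    ← QuadraticMap.polarBilin_apply_apply]

theorem polar_eq_zero_of_subset {L : Submodule k V} (hL : ∀ x ∈ L, φ x = 0)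
    {x y : V} (hx : x ∈ L) (hy : y ∈ L) : QuadraticMap.polar φ x y = 0 := by
  simp [QuadraticMap.polar, hL _ hx, hL _ hy, hL _ (L.add_mem hx hy)]

theorem le_orthogonal_of_isotropic {L : Submodule k V} (hL : ∀ x ∈ L, φ x = 0) :
    L ≤ LinearMap.BilinForm.orthogonal (QuadraticMap.polarBilin φ) L := by
  intro x hx y hy
  exact polar_eq_zero_of_subset φ hL hy hx

theorem two_mul_finrank_isotropic_le
    (hnd : LinearMap.BilinForm.Nondegenerate (QuadraticMap.polarBilin φ))
    {L : Submodule k V} (hL : ∀ x ∈ L, φ x = 0) :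
    2 * finrank k L ≤ finrank k V := by
  have h1 := Submodule.finrank_mono (le_orthogonal_of_isotropic φ hL)
  rw [LinearMap.BilinForm.finrank_orthogonal hnd L] at h1
  have h2 : finrank k L ≤ finrank k V := Submodule.finrank_le L
  omega

/-- Key: a nondegenerate quadratic form with a Lagrangian is hyperbolic. -/
theorem isHyperbolic_of_lagrangian (hchar : (2 : k) ≠ 0)
    (hnd : LinearMap.BilinForm.Nondegenerate (QuadraticMap.polarBilin φ))
    (L : Submodule k V) (hL : ∀ x ∈ L, φ x = 0)
    (hdim : 2 * finrank k L = finrank k V) : IsHyperbolic φ := by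
  classical
  set B := QuadraticMap.polarBilin φ with hB
  set θ : V →ₗ[k] Dual k L := L.subtype.dualMap ∘ₗ B with hθ
  have hθ_apply : ∀ (v : V) (x : L), θ v x = QuadraticMap.polar φ v x := fun v x => rfl
  have hker : LinearMap.ker θ = LinearMap.BilinForm.orthogonal B L := by
    ext v
    simp only [LinearMap.mem_ker, LinearMap.BilinForm.mem_orthogonal_iff]
    constructor
    · intro h n hn
      have h2 := DFunLike.congr_fun h ⟨n, hn⟩
      simp only [hθ_apply, LinearMap.zero_apply] at h2
      have h3 : QuadraticMap.polar φ n v = 0 := by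
        rw [QuadraticMap.polar_comm]; exact h2
      exact h3
    · intro h
      ext x
      have := h x x.2
      simp only [hθ_apply, LinearMap.zero_apply]
      rw [QuadraticMap.polar_comm]
      exact this
  have hfrL : finrank k (Dual k L) = finrank k L := Subspace.dual_finrank_eq
  have hsurj : LinearMap.range θ = ⊤ := by
    have h1 := LinearMap.finrank_range_add_finrank_ker θ
    rw [hker, LinearMap.BilinForm.finrank_orthogonal hnd L] at h1
    have h2 : finrank k L ≤ finrank k V := Submodule.finrank_le L
    apply Submodule.eq_top_of_finrank_eq
    omega
  obtain ⟨s, hs⟩ := θ.exists_rightInverse_of_surjective hsurj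
  have hs_apply : ∀ f : Dual k L, θ (s f) = f := fun f => by
    simpa using LinearMap.congr_fun hs f
  -- polar φ (s f) x = f x  for x ∈ L
  have hpush : ∀ (f : Dual k L) (x : L), QuadraticMap.polar φ (s f) x = f x := by
    intro f x
    rw [← hθ_apply, hs_apply]
  set u : Dual k L →ₗ[k] Dual k (Dual k L) := (2:k)⁻¹ • (s.dualMap ∘ₗ B ∘ₗ s) with hu
  set t : Dual k L →ₗ[k] L := (Module.evalEquiv k L).symm.toLinearMap ∘ₗ u with ht
  have ht_apply : ∀ (f g : Dual k L),
      g (t f) = (2:k)⁻¹ * QuadraticMap.polar φ (s f) (s g) := by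
    intro f g
    have h0 : (Module.evalEquiv k L) (t f) = u f := by
      simp [ht]
    have h2 := DFunLike.congr_fun h0 g
    rw [Module.evalEquiv_apply] at h2
    simpa [hu, hB, QuadraticMap.polarBilin_apply_apply] using h2
  set s' : Dual k L →ₗ[k] V := s - L.subtype ∘ₗ t with hs'
  have hsub : ∀ f : Dual k L, s' f = s f - (t f : V) := fun f => rfl
  -- φ (s' f) = 0
  have hφs' : ∀ f : Dual k L, φ (s' f) = 0 := by
    intro f
    have hpolar : QuadraticMap.polar φ (s f) ((t f : V)) = f (t f) := hpush f (t f)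
    have hft : f (t f) = φ (s f) := by
      rw [ht_apply f f, QuadraticMap.polar_self]
      field_simp
      rw [two_nsmul, two_mul]
    have hφnt : φ (-(t f : V)) = 0 := hL _ (L.neg_mem (t f).2)
    have e1 : φ (s f + -(t f : V)) =
        φ (s f) + φ (-(t f : V)) + QuadraticMap.polar φ (s f) (-(t f : V)) := by
      simp only [QuadraticMap.polar]; ring
    rw [hsub f, sub_eq_add_neg, e1, QuadraticMap.polar_neg_right, hpolar, hft, hφnt]
    ring
  have hθL : ∀ x : L, θ (x : V) = 0 := by
    intro x
    ext y
    simp only [hθ_apply, LinearMap.zero_apply]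
    exact polar_eq_zero_of_subset φ hL x.2 y.2
  have hθs' : ∀ f : Dual k L, θ (s' f) = f := by
    intro f
    rw [hsub f, map_sub, hs_apply, hθL, sub_zero]
  set ψ : L × Dual k L →ₗ[k] V := (L.subtype).coprod s' with hψ
  have hψ_apply : ∀ p : L × Dual k L, ψ p = (p.1 : V) + s' p.2 := fun p => rfl
  have hinj : Function.Injective ψ := by
    rw [injective_iff_map_eq_zero]
    rintro ⟨x, f⟩ h
    rw [hψ_apply] at h
    have hf : f = 0 := by
      have h2 := congrArg θ h
      rw [map_add, hθL x, hθs' f, zero_add, map_zero] at h2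
      exact h2
    have hx : (x : V) = 0 := by
      rw [hf, map_zero, add_zero] at h
      exact h
    exact Prod.ext (Subtype.ext hx) hf
  have hfinrank : finrank k (L × Dual k L) = finrank k V := by
    rw [Module.finrank_prod, hfrL]
    omega
  set ψe := LinearMap.linearEquivOfInjective ψ hinj hfinrank with hψe
  have hiso : ∀ p : L × Dual k L, φ (ψe p) = evalForm k L p := by
    rintro ⟨x, f⟩
    have : ψe (x, f) = ψ (x, f) := rfl
    rw [this, hψ_apply]
    have e1 : φ ((x : V) + s' f) =
        φ (x : V) + φ (s' f) + QuadraticMap.polar φ (x : V) (s' f) := by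
      simp only [QuadraticMap.polar]; ring
    have e2 : QuadraticMap.polar φ ((x : V)) (s' f) = f x := by
      rw [QuadraticMap.polar_comm, hsub f, QuadraticMap.polar_sub_left, hpush f x,
        polar_eq_zero_of_subset φ hL (t f).2 x.2, sub_zero]
    rw [e1, e2, hφs' f, hL _ x.2]
    simp [evalForm_apply]
  refine ⟨finrank k L, ?_⟩
  have equiv1 : (evalForm k L).Equivalent φ := ⟨{ ψe with map_app' := hiso }⟩
  exact equiv1.symm.trans (evalForm_equivalent (Module.finBasis k L).equivFun)
end Core

section Extract
variable {k V : Type*} [Field k] [AddCommGroup V] [Module k V] [FiniteDimensional k V]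
  (φ : QuadraticForm k V)

/-- From an equivalence with a hyperbolic form, extract a Lagrangian. -/
theorem exists_lagrangian_of_equivalent {n : ℕ}
    (h : φ.Equivalent (evalForm k (Fin n → k))) :
    ∃ L : Submodule k V, (∀ x ∈ L, φ x = 0) ∧ finrank k L = n ∧ finrank k V = 2 * n := by
  obtain ⟨f⟩ := h
  let g := f.symm
  let L0 : Submodule k ((Fin n → k) × Module.Dual k (Fin n → k)) :=
    LinearMap.range (LinearMap.inr k (Fin n → k) (Module.Dual k (Fin n → k)))
  have hn : finrank k (Fin n → k) = n := by simp
  refine ⟨Submodule.map (g.toLinearEquiv : _ →ₗ[k] V) L0, ?_, ?_, ?_⟩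
  · rintro x hx
    obtain ⟨y, hy, rfl⟩ := hx
    obtain ⟨b, rfl⟩ := hy
    simp only [LinearMap.inr_apply]
    have h1 : (g.toLinearEquiv : _ →ₗ[k] V) ((0 : Fin n → k), b) = g ((0 : Fin n → k), b) := rfl
    rw [h1, g.map_app, evalForm_apply]
    simp
  · rw [g.toLinearEquiv.finrank_map_eq L0,
      LinearMap.finrank_range_of_inj LinearMap.inr_injective,
      Subspace.dual_finrank_eq, hn]
  · have h2 := f.toLinearEquiv.finrank_eq
    rw [h2, Module.finrank_prod, Subspace.dual_finrank_eq, hn]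
    ring
end Extract

section RankLemma
variable {k P V' : Type*} [Field k] [AddCommGroup P] [Module k P] [FiniteDimensional k P]
  [AddCommGroup V'] [Module k V']

theorem finrank_map_add_finrank_inf_ker (N : Submodule k P) (f : P →ₗ[k] V') :
    finrank k (Submodule.map f N) + finrank k (N ⊓ LinearMap.ker f : Submodule k P)
      = finrank k N := by
  have h1 := LinearMap.finrank_range_add_finrank_ker (f.domRestrict N)
  have h2 : LinearMap.range (f.domRestrict N) = Submodule.map f N := by
    ext x
    simp [LinearMap.mem_range, Submodule.mem_map]
  have h3 : LinearMap.ker (f.domRestrict N) = Submodule.comap N.subtype (LinearMap.ker f) := by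
    ext x
    simp
  rw [h2, h3] at h1
  have h4 : Submodule.comap N.subtype (LinearMap.ker f)
      = Submodule.comap N.subtype (N ⊓ LinearMap.ker f) := by
    rw [Submodule.comap_inf]
    rw [Submodule.comap_subtype_self]
    rw [top_inf_eq]
  rw [h4] at h1
  rw [(Submodule.comapSubtypeEquivOfLe (inf_le_left :
    N ⊓ LinearMap.ker f ≤ N)).finrank_eq] at h1
  exact h1

theorem finrank_le_finrank_inf_ker_add_one (N : Submodule k P) (f : P →ₗ[k] k) :
    finrank k N ≤ finrank k (N ⊓ LinearMap.ker f : Submodule k P) + 1 := by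
  have h1 := finrank_map_add_finrank_inf_ker N f
  have h2 : finrank k (Submodule.map f N) ≤ 1 := by
    have := Submodule.finrank_le (Submodule.map f N)
    simpa using this
  omega

end RankLemma

/-- The standard hyperbolic plane on `k × k`. -/
noncomputable def Qplane (k : Type*) [Field k] : QuadraticForm k (k × k) :=
  LinearMap.BilinMap.toQuadraticMap
    (LinearMap.mk₂ k (fun u v => u.1 * v.2)
      (by intros; simp; ring) (by intros; simp; ring)
      (by intros; simp; ring) (by intros; simp; ring))

theorem Qplane_apply {k : Type*} [Field k] (u : k × k) : Qplane k u = u.1 * u.2 := rfl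

theorem polar_Qplane {k : Type*} [Field k] (u v : k × k) :
    QuadraticMap.polar (Qplane k) u v = u.1 * v.2 + v.1 * u.2 := by
  simp [QuadraticMap.polar, Qplane_apply]; ring

section Descent
variable {k V : Type*} [Field k] [AddCommGroup V] [Module k V] [FiniteDimensional k V]

theorem descent (hchar : (2:k) ≠ 0) (φ : QuadraticForm k V)
    (hnd : LinearMap.BilinForm.Nondegenerate (QuadraticMap.polarBilin φ))
    {n : ℕ} (hn : (φ.prod (Qplane k)).Equivalent (evalForm k (Fin n → k))) :
    IsHyperbolic φ := by
  classical
  set ρ := φ.prod (Qplane k) with hρ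
  obtain ⟨M, hM0, hMrank, hPrank⟩ := exists_lagrangian_of_equivalent _ hn
  have hVrank : finrank k V + 2 = 2 * n := by
    rw [Module.finrank_prod, Module.finrank_prod, Module.finrank_self] at hPrank
    omega
  have hn1 : 1 ≤ n := by omega
  have hρ_apply : ∀ p : V × k × k, ρ p = φ p.1 + p.2.1 * p.2.2 := by
    intro p
    show (φ.prod (Qplane k)) p = _
    rw [QuadraticMap.prod_apply, Qplane_apply]
  have hMpol : ∀ p ∈ M, ∀ q ∈ M, QuadraticMap.polar ρ p q = 0 :=
    fun p hp q hq => polar_eq_zero_of_subset ρ hM0 hp hq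
  set e : V × k × k := (0, (1, 0)) with he
  set lam : V × k × k →ₗ[k] k := (QuadraticMap.polarBilin ρ).flip e with hlam
  have hlam_polar : ∀ p : V × k × k, lam p = QuadraticMap.polar ρ p e := fun p => rfl
  have hlam_eval : ∀ p : V × k × k, lam p = p.2.2 := by
    intro p
    rw [hlam_polar, he, hρ, QuadraticMap.polar_prod, QuadraticMap.polar_zero_right,
      polar_Qplane]
    simp
  set N : Submodule k (V × k × k) := M ⊓ LinearMap.ker lam with hN
  have hNlower : finrank k M ≤ finrank k N + 1 :=
    finrank_le_finrank_inf_ker_add_one M lam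
  set pr : V × k × k →ₗ[k] V := LinearMap.fst k V (k × k) with hpr
  set L : Submodule k V := Submodule.map pr N with hL
  set Z : Submodule k (V × k × k) := N ⊓ LinearMap.ker pr with hZ
  have hrank_split : finrank k L + finrank k Z = finrank k N :=
    finrank_map_add_finrank_inf_ker N pr
  -- elements of N
  have hNsnd : ∀ p ∈ N, p.2.2 = (0:k) := by
    intro p hp
    have h1 : lam p = 0 := hp.2
    rw [hlam_eval] at h1
    exact h1
  -- φ vanishes on L
  have hLvan : ∀ x ∈ L, φ x = 0 := by
    rintro x ⟨p, hp, rfl⟩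
    have h1 : ρ p = 0 := hM0 p hp.1
    rw [hρ_apply, hNsnd p hp, mul_zero, add_zero] at h1
    exact h1
  -- Z is at most a line
  have hZelem : ∀ p ∈ Z, p = ((0:V), (p.2.1, (0:k))) := by
    intro p hp
    have h1 : p.1 = 0 := hp.2
    have h2 : p.2.2 = 0 := hNsnd p hp.1
    exact Prod.ext_iff.mpr ⟨h1, Prod.ext_iff.mpr ⟨rfl, h2⟩⟩
  have hZrank : finrank k Z ≤ 1 := by
    set ξ : Z →ₗ[k] k := (LinearMap.fst k k k) ∘ₗ (LinearMap.snd k V (k × k)) ∘ₗ Z.subtype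
      with hξ
    have hξinj : Function.Injective ξ := by
      rw [injective_iff_map_eq_zero]
      intro q hq
      have h1 : (q : V × k × k) = 0 := by
        rw [hZelem (q : V × k × k) q.2]
        have : ((q : V × k × k)).2.1 = 0 := hq
        rw [this]
        rfl
      exact Subtype.ext h1
    have := LinearMap.finrank_le_finrank_of_injective hξinj
    simpa using this
  -- lower bound for L
  have hLlower : n - 1 ≤ finrank k L := by
    by_cases hcase : Z = ⊥
    · rw [hcase, finrank_bot] at hrank_split
      omega
    · obtain ⟨p, hpZ, hpne⟩ := Submodule.exists_mem_ne_zero_of_ne_bot hcase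
      have hpform : p = ((0:V), (p.2.1, (0:k))) := hZelem p hpZ
      have ha : p.2.1 ≠ 0 := by
        intro h0
        apply hpne
        rw [hpform, h0]
        rfl
      have hpM : p ∈ M := hpZ.1.1
      have heM : e ∈ M := by
        have hsmul : (p.2.1)⁻¹ • p ∈ M := M.smul_mem _ hpM
        have : (p.2.1)⁻¹ • p = e := by
          rw [he]
          conv_lhs => rw [hpform]
          rw [Prod.smul_mk, Prod.smul_mk, smul_zero, smul_zero, smul_eq_mul,
            inv_mul_cancel₀ ha]
        rwa [this] at hsmul
      have hMle : M ≤ LinearMap.ker lam := by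
        intro m hm
        rw [LinearMap.mem_ker, hlam_polar]
        exact hMpol m hm e heM
      have hNM : N = M := by
        rw [hN, inf_eq_left.mpr hMle]
      rw [hNM, hMrank] at hrank_split
      omega
  -- upper bound and conclusion
  have hLupper := two_mul_finrank_isotropic_le φ hnd hLvan
  have hLrank : 2 * finrank k L = finrank k V := by omega
  exact isHyperbolic_of_lagrangian φ hchar hnd L hLvan hLrank
end Descent

section Glue
variable {k : Type*} [Field k]

/-- nondegeneracy of a product of nondegenerate forms -/
theorem polarBilin_prod_nondeg {V W : Type*} [AddCommGroup V] [Module k V]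
    [AddCommGroup W] [Module k W] {Q₁ : QuadraticForm k V} {Q₂ : QuadraticForm k W}
    (h1 : LinearMap.BilinForm.Nondegenerate (QuadraticMap.polarBilin Q₁))
    (h2 : LinearMap.BilinForm.Nondegenerate (QuadraticMap.polarBilin Q₂)) :
    LinearMap.BilinForm.Nondegenerate (QuadraticMap.polarBilin (Q₁.prod Q₂)) := by
  constructor
  · rintro ⟨x, y⟩ h
    have hx : x = 0 := by
      apply h1.1
      intro v
      have := h (v, 0)
      rwa [QuadraticMap.polarBilin_apply_apply, QuadraticMap.polar_prod,
        QuadraticMap.polar_zero_right, add_zero] at this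
    have hy : y = 0 := by
      apply h2.1
      intro w
      have := h (0, w)
      rwa [QuadraticMap.polarBilin_apply_apply, QuadraticMap.polar_prod,
        QuadraticMap.polar_zero_right, zero_add] at this
    simp [hx, hy, Prod.ext_iff]
  · rintro ⟨x, y⟩ h
    have hx : x = 0 := by
      apply h1.2
      intro v
      have := h (v, 0)
      rwa [QuadraticMap.polarBilin_apply_apply, QuadraticMap.polar_prod,
        QuadraticMap.polar_zero_left, add_zero] at this
    have hy : y = 0 := by
      apply h2.2
      intro w
      have := h (0, w)
      rwa [QuadraticMap.polarBilin_apply_apply, QuadraticMap.polar_prod,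
        QuadraticMap.polar_zero_left, zero_add] at this
    simp [hx, hy, Prod.ext_iff]

/-- The plane form is equivalent to the hyperbolic form on `Fin 1 → k`. -/
theorem Qplane_equivalent : (Qplane k).Equivalent (evalForm k (Fin 1 → k)) := by
  let c : Fin 1 → k := fun _ => 1
  let F : k × k →ₗ[k] (Fin 1 → k) × Module.Dual k (Fin 1 → k) :=
    LinearMap.prodMap ((LinearEquiv.funUnique (Fin 1) k k).symm : k →ₗ[k] (Fin 1 → k))
      (LinearMap.toSpanSingleton k _ (LinearMap.proj (0 : Fin 1)))
  let G : (Fin 1 → k) × Module.Dual k (Fin 1 → k) →ₗ[k] k × k :=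
    LinearMap.prodMap ((LinearEquiv.funUnique (Fin 1) k k) : (Fin 1 → k) →ₗ[k] k)
      ((Module.Dual.eval k (Fin 1 → k)) c)
  have hGF : G ∘ₗ F = LinearMap.id := by
    ext x <;> simp [F, G, c, LinearEquiv.funUnique]
  have hFG : F ∘ₗ G = LinearMap.id := by
    apply LinearMap.ext
    rintro ⟨a, g⟩
    have ha : (fun _ => a 0 : Fin 1 → k) = a := by
      funext i
      have hi : i = 0 := Subsingleton.elim _ _
      rw [hi]
    have hg : g c • (LinearMap.proj (0:Fin 1) : (Fin 1 → k) →ₗ[k] k) = g := by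
      apply LinearMap.ext
      intro b
      have hb : b = b 0 • c := by
        funext i
        have hi : i = 0 := Subsingleton.elim _ _
        rw [hi]
        simp [c]
      rw [LinearMap.smul_apply, LinearMap.proj_apply]
      conv_rhs => rw [hb]
      rw [map_smul]
      simp [mul_comm]
    rw [LinearMap.comp_apply, LinearMap.id_apply]
    show ((fun _ => a 0 : Fin 1 → k), g c • (LinearMap.proj (0:Fin 1) : (Fin 1 → k) →ₗ[k] k))
      = (a, g)
    exact Prod.ext_iff.mpr ⟨ha, hg⟩
  refine ⟨⟨LinearEquiv.ofLinear F G hFG hGF, ?_⟩⟩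
  rintro ⟨x, y⟩
  show evalForm k (Fin 1 → k) (F (x, y)) = Qplane k (x, y)
  show (y • (LinearMap.proj (0:Fin 1) : (Fin 1 → k) →ₗ[k] k)) (fun _ => x) = x * y
  simp [mul_comm]
end Glue

section Assembly
variable {k : Type*} [Field k]

theorem evalForm_prod_equivalent {M N : Type*} [AddCommGroup M] [Module k M]
    [AddCommGroup N] [Module k N] :
    (evalForm k (M × N)).Equivalent ((evalForm k M).prod (evalForm k N)) := by
  refine ⟨QuadraticMap.IsometryEquiv.symm ⟨?_, ?_⟩⟩
  · exact (LinearEquiv.prodProdProdComm k M (Module.Dual k M) N (Module.Dual k N)).trans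
      ((LinearEquiv.refl k (M × N)).prodCongr (Module.dualProdDualEquivDual k M N))
  · rintro ⟨⟨x, f⟩, ⟨y, g⟩⟩
    simp [evalForm_apply, QuadraticMap.prod_apply, LinearEquiv.prodCongr_apply,
      LinearEquiv.prodProdProdComm, Module.dualProdDualEquivDual]
    rfl

theorem polarBilin_evalForm_nondeg {M : Type*} [AddCommGroup M] [Module k M]
    [FiniteDimensional k M] :
    LinearMap.BilinForm.Nondegenerate (QuadraticMap.polarBilin (evalForm k M)) := by
  constructor
  · rintro ⟨x, f⟩ h
    have h1 : f = 0 := by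
      ext y
      simpa [polar_evalForm] using h (y, 0)
    have h2 : x = 0 := by
      rw [← Module.forall_dual_apply_eq_zero_iff k x]
      intro g
      simpa [polar_evalForm, h1] using h (0, g)
    simp [h1, h2, Prod.ext_iff]
  · rintro ⟨x, f⟩ h
    have h1 : f = 0 := by
      ext y
      simpa [polar_evalForm] using h (y, 0)
    have h2 : x = 0 := by
      rw [← Module.forall_dual_apply_eq_zero_iff k x]
      intro g
      simpa [polar_evalForm, h1] using h (0, g)
    simp [h1, h2, Prod.ext_iff]

theorem prod_assoc_equivalent {V₁ V₂ V₃ : Type*} [AddCommGroup V₁] [Module k V₁]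
    [AddCommGroup V₂] [Module k V₂] [AddCommGroup V₃] [Module k V₃]
    (Q₁ : QuadraticForm k V₁) (Q₂ : QuadraticForm k V₂) (Q₃ : QuadraticForm k V₃) :
    ((Q₁.prod Q₂).prod Q₃).Equivalent (Q₁.prod (Q₂.prod Q₃)) := by
  refine ⟨⟨LinearEquiv.prodAssoc k V₁ V₂ V₃, ?_⟩⟩
  rintro ⟨⟨a, b⟩, c⟩
  simp [QuadraticMap.prod_apply, LinearEquiv.prodAssoc, add_assoc]

theorem evalForm_fin_succ (m : ℕ) :
    (evalForm k (Fin (m+1) → k)).Equivalent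
      ((evalForm k (Fin m → k)).prod (Qplane k)) := by
  have e1 : (Fin (m+1) → k) ≃ₗ[k] ((Fin m → k) × (Fin 1 → k)) :=
    (LinearEquiv.funCongrLeft k k finSumFinEquiv).trans
      (LinearEquiv.sumArrowLequivProdArrow _ _ k k)
  refine (evalForm_equivalent e1).trans ?_
  refine (evalForm_prod_equivalent).trans ?_
  exact QuadraticMap.Equivalent.prod (QuadraticMap.Equivalent.refl _)
    Qplane_equivalent.symm

theorem prod_zero_equivalent {V : Type*} [AddCommGroup V] [Module k V]
    (φ : QuadraticForm k V) :
    φ.Equivalent (φ.prod (evalForm k (Fin 0 → k))) := by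
  haveI : Subsingleton (Module.Dual k (Fin 0 → k)) :=
    ⟨fun f g => LinearMap.ext fun x => by rw [Subsingleton.elim x 0, map_zero, map_zero]⟩
  haveI : Subsingleton ((Fin 0 → k) × Module.Dual k (Fin 0 → k)) := inferInstance
  set T := (Fin 0 → k) × Module.Dual k (Fin 0 → k)
  refine ⟨⟨LinearEquiv.ofLinear (LinearMap.inl k V T) (LinearMap.fst k V T) ?_ ?_, ?_⟩⟩
  · apply LinearMap.ext
    intro p
    exact Prod.ext_iff.mpr ⟨rfl, Subsingleton.elim _ _⟩
  · apply LinearMap.ext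
    intro v
    rfl
  · intro v
    show (φ.prod (evalForm k (Fin 0 → k))) (v, 0) = φ v
    rw [QuadraticMap.prod_apply, map_zero, add_zero]

end Assembly

/-- Over a field of characteristic ≠ 2, a non-degenerate stably hyperbolic quadratic
form is hyperbolic. -/
theorem stmt2 (k : Type*) [Field k] (hchar : (2 : k) ≠ 0)
    (V : Type*) [AddCommGroup V] [Module k V] [FiniteDimensional k V]
    (φ : QuadraticForm k V)
    (hnd : LinearMap.BilinForm.Nondegenerate (QuadraticMap.polarBilin φ))
    (hstab : ∃ m : ℕ, IsHyperbolic (φ.prod (evalForm k (Fin m → k)))) :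
    IsHyperbolic φ := by
  obtain ⟨m, hm⟩ := hstab
  induction m with
  | zero =>
    obtain ⟨n, hn⟩ := hm
    exact ⟨n, (prod_zero_equivalent φ).trans hn⟩
  | succ m ih =>
    apply ih
    obtain ⟨n, hn⟩ := hm
    have he : ((φ.prod (evalForm k (Fin m → k))).prod (Qplane k)).Equivalent
        (φ.prod (evalForm k (Fin (m+1) → k))) :=
      (prod_assoc_equivalent _ _ _).trans
        (QuadraticMap.Equivalent.prod (QuadraticMap.Equivalent.refl _)
          (evalForm_fin_succ m).symm)
    have hnd' : LinearMap.BilinForm.Nondegenerate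
        (QuadraticMap.polarBilin (φ.prod (evalForm k (Fin m → k)))) :=
      polarBilin_prod_nondeg hnd polarBilin_evalForm_nondeg
    exact descent hchar _ hnd' (he.trans hn)
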